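/- In the platform-choice game, the fully integrated state ω_ll = (N^A, N^B), in which every agent is on platform m, is a Nash equilibrium (no agent strictly gains by unilaterally moving to platform ℓ, where the deviator's payoff is evaluated at the post-deviation state) if and only if γ_A ≥ (N^B/(N^A − 1))·δ and γ_B ≥ (N^A/(N^B − 1))·δ. -/
import Mathlib


/-- Utility of a Group A agent on platform m at state (nAm, nBm). -/
noncomputable def UAm (γA δ nAm nBm : ℝ) : ℝ := (nAm - 1) * γA - nBm * δ

/-- Utility of a Group A agent on platform ℓ at state (nAm, nBm). -/
noncomputable def UAl (NA NB γA δ nAm nBm : ℝ) : ℝ :=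
  (NA - nAm - 1) * (1 - γA) - (NB - nBm) * δ

/-- Utility of a Group B agent on platform m at state (nAm, nBm). -/
noncomputable def UBm (γB δ nAm nBm : ℝ) : ℝ := -nAm * δ + (nBm - 1) * γB

/-- Utility of a Group B agent on platform ℓ at state (nAm, nBm). -/
noncomputable def UBl (NA NB γB δ nAm nBm : ℝ) : ℝ :=
  -(NA - nAm) * δ + (NB - nBm - 1) * (1 - γB)

/-- The fully integrated state ω_ll = (N^A, N^B) (everyone on m) is a Nash
equilibrium (no agent strictly gains by unilaterally moving to ℓ, the
deviator's payoff evaluated at the post-deviation state) if and only if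
γ_A ≥ (N^B/(N^A − 1))·δ and γ_B ≥ (N^A/(N^B − 1))·δ. -/
theorem omega_ll_equilibrium_iff
    (NA NB : ℕ) (hNA : 2 ≤ NA) (hNB : 2 ≤ NB)
    (γA γB δ : ℝ) (hγA : γA ∈ Set.Ioo (1/2 : ℝ) 1) (hγB : γB ∈ Set.Ioo (1/2 : ℝ) 1)
    (hδ : 0 < δ) :
    (UAl NA NB γA δ (NA - 1 : ℕ) NB ≤ UAm γA δ NA NB ∧
      UBl NA NB γB δ NA (NB - 1 : ℕ) ≤ UBm γB δ NA NB) ↔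
    (γA ≥ ((NB : ℝ) / ((NA : ℝ) - 1)) * δ ∧ γB ≥ ((NA : ℝ) / ((NB : ℝ) - 1)) * δ) := by
  have hA1 : (1:ℝ) ≤ (NA:ℝ) := by exact_mod_cast Nat.one_le_of_lt hNA
  have hB1 : (1:ℝ) ≤ (NB:ℝ) := by exact_mod_cast Nat.one_le_of_lt hNB
  have hA2 : (2:ℝ) ≤ (NA:ℝ) := by exact_mod_cast hNA
  have hB2 : (2:ℝ) ≤ (NB:ℝ) := by exact_mod_cast hNB
  have hApos : (0:ℝ) < (NA:ℝ) - 1 := by linarith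
  have hBpos : (0:ℝ) < (NB:ℝ) - 1 := by linarith
  have hcA : ((NA - 1 : ℕ) : ℝ) = (NA:ℝ) - 1 := by
    have : 1 ≤ NA := by omega
    push_cast [this]; ring
  have hcB : ((NB - 1 : ℕ) : ℝ) = (NB:ℝ) - 1 := by
    have : 1 ≤ NB := by omega
    push_cast [this]; ring
  rw [hcA, hcB]
  unfold UAl UAm UBl UBm
  rw [ge_iff_le, ge_iff_le, div_mul_eq_mul_div, div_le_iff₀ hApos,
    div_mul_eq_mul_div, div_le_iff₀ hBpos]
  constructor
  · rintro ⟨h1, h2⟩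
    constructor <;> nlinarith
  · rintro ⟨h1, h2⟩
    constructor <;> nlinarith
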